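/- arXiv:2110.08293 — 2 statements merged into one kernel-verified Lean document; each statement's English description precedes it below -/
import Mathlib

section
/- If φ is a fiducial state of a Weyl-Heisenberg covariant SIC-POVM in dimension d, then the vector of squared amplitudes (|⟨0,φ⟩|²,...,|⟨d−1,φ⟩|²)ᵀ equals F†((1/√d)e_0 + (1/√(d(d+1))) Σ_{j=1}^{d−1} e^{iα_j} e_j) for some phases α_j ∈ [0,2π) satisfying α_{d−j} = −α_j for all j = 1,...,d−1, where F is the discrete Fourier transform. -/
open Matrix

/-- The discrete Fourier transform matrix `F_{jk} = ω^{jk}/√d`, `ω = e^{2πi/d}`. -/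
noncomputable def Fmat (d : ℕ) : Matrix (Fin d) (Fin d) ℂ :=
  fun j k => Complex.exp (2 * Real.pi * Complex.I * ((j : ℕ) : ℂ) * ((k : ℕ) : ℂ) / d) /
    (Real.sqrt d : ℂ)

/-- The cyclic shift `X = ∑ₖ |k+1⟩⟨k|`. -/
def Xmat (d : ℕ) [NeZero d] : Matrix (Fin d) (Fin d) ℂ :=
  fun j k => if j = k + 1 then 1 else 0

/-- The phase operator `Z = ∑ₖ ω^k |k⟩⟨k|`. -/
noncomputable def Zmat (d : ℕ) : Matrix (Fin d) (Fin d) ℂ :=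
  Matrix.diagonal fun j => Complex.exp (2 * Real.pi * Complex.I * ((j : ℕ) : ℂ) / d)

noncomputable def ee (d : ℕ) (n : ℤ) : ℂ :=
  Complex.exp (2 * Real.pi * Complex.I * (n : ℂ) / d)

lemma ee_add (d : ℕ) (m n : ℤ) : ee d (m + n) = ee d m * ee d n := by
  rw [ee, ee, ee, ← Complex.exp_add]
  congr 1
  push_cast
  ring

lemma ee_dvd (d : ℕ) [NeZero d] {n : ℤ} (h : (d : ℤ) ∣ n) : ee d n = 1 := by
  obtain ⟨t, rfl⟩ := h
  have hd : ((d : ℂ)) ≠ 0 := Nat.cast_ne_zero.mpr (NeZero.ne d)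
  rw [ee]
  rw [show 2 * (Real.pi : ℂ) * Complex.I * ((((d : ℤ) * t : ℤ)) : ℂ) / d
      = (t : ℂ) * (2 * Real.pi * Complex.I) by push_cast; field_simp]
  exact Complex.exp_int_mul_two_pi_mul_I t

lemma ee_nat_mul (d : ℕ) (k : ℕ) (m : ℤ) : ee d (k * m) = ee d m ^ k := by
  induction k with
  | zero => simp [ee]
  | succ k ih =>
    rw [show ((k+1 : ℕ) : ℤ) * m = (k : ℤ) * m + m by push_cast; ring, ee_add, ih, pow_succ]

lemma ee_conj (d : ℕ) (n : ℤ) : (starRingEnd ℂ) (ee d n) = ee d (-n) := by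
  rw [ee, ee, ← Complex.exp_conj]
  congr 1
  simp [map_div₀, Complex.conj_I, map_ofNat]

lemma ee_ne_one (d : ℕ) [NeZero d] {m : ℤ} (h : ¬ (d : ℤ) ∣ m) : ee d m ≠ 1 := by
  intro hc
  rw [ee, Complex.exp_eq_one_iff] at hc
  obtain ⟨n, hn⟩ := hc
  have hd : ((d : ℂ)) ≠ 0 := Nat.cast_ne_zero.mpr (NeZero.ne d)
  have hpi : (2 * (Real.pi : ℂ) * Complex.I) ≠ 0 := by
    simp [Real.pi_ne_zero, Complex.I_ne_zero]
  have hmc : (m : ℂ) = (n : ℂ) * d := by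
    field_simp at hn
    have h2 : (2 * (Real.pi : ℂ) * Complex.I) * m = (2 * (Real.pi : ℂ) * Complex.I) * (n * d) := by
      linear_combination (2 * (Real.pi : ℂ) * Complex.I) * hn
    exact mul_left_cancel₀ hpi h2
  have : m = n * d := by exact_mod_cast hmc
  exact h ⟨n, by rw [this, mul_comm]⟩

lemma ee_emod (d : ℕ) [NeZero d] {m n : ℤ} (h : m ≡ n [ZMOD d]) : ee d m = ee d n := by
  have hdvd : (d : ℤ) ∣ m - n := Int.ModEq.dvd h.symm
  have : ee d (n + (m - n)) = ee d n * ee d (m - n) := ee_add d n (m - n)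
  rw [ee_dvd d hdvd, mul_one] at this
  simpa using this

lemma ee_sum (d : ℕ) [NeZero d] (m : ℤ) :
    ∑ k : Fin d, ee d ((k : ℕ) * m) = if (d : ℤ) ∣ m then (d : ℂ) else 0 := by
  split_ifs with h
  · have : ∀ k : Fin d, ee d ((k : ℕ) * m) = 1 := fun k =>
      ee_dvd d (Dvd.dvd.mul_left h _)
    simp [this]
  · have h1 : ∀ k : Fin d, ee d ((k : ℕ) * m) = ee d m ^ (k : ℕ) := fun k =>
      ee_nat_mul d k m
    simp only [h1]
    rw [Fin.sum_univ_eq_sum_range (fun k => ee d m ^ k), geom_sum_eq (ee_ne_one d h)]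
    have : ee d m ^ d = 1 := by
      rw [← ee_nat_mul]; exact ee_dvd d ⟨m, by ring⟩
    simp [this]



/-- If `φ` is a fiducial state of a Weyl-Heisenberg covariant SIC-POVM
in dimension `d`, then the vector of squared amplitudes `(|⟨j,φ⟩|²)_j` equals
`F†((1/√d)e₀ + (1/√(d(d+1))) ∑_{j≠0} e^{iα_j} e_j)` for phases `α_j ∈ [0,2π)` with
`α_{d−j} = −α_j` (as phases, i.e. `e^{iα_{d-j}} = e^{-iα_j}`). -/
theorem fiducial_amplitudes (d : ℕ) [NeZero d] (φ : Fin d → ℂ)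
    (hunit : ∑ j, ‖φ j‖ ^ 2 = 1)
    (hfid : ∀ j k : Fin d, (j, k) ≠ (0, 0) →
      ‖star φ ⬝ᵥ ((Xmat d ^ (j : ℕ) * Zmat d ^ (k : ℕ)) *ᵥ φ)‖ ^ 2 = 1 / (d + 1)) :
    ∃ α : Fin d → ℝ, (∀ j, 0 ≤ α j ∧ α j < 2 * Real.pi) ∧
      (∀ j : Fin d, j ≠ 0 →
        Complex.exp (Complex.I * α (-j)) = Complex.exp (-(Complex.I * α j))) ∧
      (fun j : Fin d => (‖φ j‖ ^ 2 : ℂ)) =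
        (Fmat d)ᴴ *ᵥ fun j : Fin d =>
          if j = 0 then (1 / (Real.sqrt d : ℂ))
          else Complex.exp (Complex.I * α j) / (Real.sqrt (d * (d + 1)) : ℂ) := by
  have hd0 : d ≠ 0 := NeZero.ne d
  have hdR : (0:ℝ) < d := by exact_mod_cast Nat.pos_of_ne_zero hd0
  set c : Fin d → ℂ := fun k => ∑ i : Fin d, ee d ((k:ℕ) * (i:ℕ)) * (‖φ i‖ : ℂ)^2 with hc
  -- Step 1 : the inner product with Z^k is c k
  have hZ : ∀ k : Fin d, star φ ⬝ᵥ ((Xmat d ^ ((0:Fin d) : ℕ) * Zmat d ^ (k : ℕ)) *ᵥ φ) = c k := by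
    intro k
    have h0 : ((0 : Fin d) : ℕ) = 0 := rfl
    rw [h0, pow_zero, one_mul, Zmat, Matrix.diagonal_pow]
    rw [dotProduct]
    apply Finset.sum_congr rfl
    intro i _
    rw [Matrix.mulVec_diagonal]
    have h1 : ((fun j : Fin d => Complex.exp (2 * Real.pi * Complex.I * ((j:ℕ):ℂ) / d)) ^ (k:ℕ)) i
        = ee d ((k:ℕ) * (i:ℕ)) := by
      simp only [Pi.pow_apply]
      rw [ee_nat_mul, ee]
      norm_cast
    rw [h1, Pi.star_apply]
    have h2 : (star (φ i)) * φ i = (‖φ i‖ : ℂ)^2 := Complex.conj_mul' (φ i)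
    calc star (φ i) * (ee d ((k:ℕ)*(i:ℕ)) * φ i)
        = ee d ((k:ℕ)*(i:ℕ)) * (star (φ i) * φ i) := by ring
      _ = ee d ((k:ℕ)*(i:ℕ)) * (‖φ i‖ : ℂ)^2 := by rw [h2]
  -- Step 2 : norms of c k
  have hcnorm : ∀ k : Fin d, k ≠ 0 → ‖c k‖ = Real.sqrt (1/(d+1)) := by
    intro k hk
    have h := hfid 0 k (by simp [hk])
    rw [hZ k] at h
    rw [show ‖c k‖ = Real.sqrt (‖c k‖^2) from (Real.sqrt_sq (norm_nonneg _)).symm, h]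
  have hc0 : c 0 = 1 := by
    have : ∀ i : Fin d, ee d (((0:Fin d):ℕ) * (i:ℕ)) = 1 := by
      intro i; simp [ee]
    simp only [hc, this, one_mul]
    rw [show (1:ℂ) = ((1:ℝ):ℂ) by norm_num, ← hunit]
    push_cast
    ring
  have hcne : ∀ k : Fin d, k ≠ 0 → c k ≠ 0 := by
    intro k hk h0
    have := hcnorm k hk
    rw [h0, norm_zero] at this
    have hpos : 0 < Real.sqrt (1/(d+1)) := Real.sqrt_pos.mpr (by positivity)
    linarith
  -- Step 3 : conjugation symmetry
  have hconj : ∀ k : Fin d, c (-k) = (starRingEnd ℂ) (c k) := by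
    intro k
    have hmod : ((((-k) : Fin d) : ℕ) : ℤ) ≡ -(((k:ℕ)):ℤ) [ZMOD (d:ℤ)] := by
      have hv : ((-k) + k : Fin d) = 0 := neg_add_cancel k
      have h1 : ((((-k):Fin d):ℕ) + (k:ℕ)) % d = 0 := by
        have := Fin.val_add (-k) k
        rw [hv] at this
        simpa using this.symm
      have hdvd : (d:ℤ) ∣ ((((-k):Fin d):ℕ) : ℤ) + ((k:ℕ):ℤ) := by
        exact_mod_cast Nat.dvd_of_mod_eq_zero h1
      rw [Int.modEq_iff_dvd, show -(((k:ℕ)):ℤ) - ((((-k):Fin d):ℕ) : ℤ)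
          = -(((((-k):Fin d):ℕ) : ℤ) + ((k:ℕ):ℤ)) by ring]
      exact dvd_neg.mpr hdvd
    calc c (-k) = ∑ i : Fin d, ee d (-((k:ℕ) * (i:ℕ))) * (‖φ i‖ : ℂ)^2 := by
          apply Finset.sum_congr rfl
          intro i _
          congr 1
          apply ee_emod
          calc ((((-k):Fin d):ℕ) : ℤ) * ((i:ℕ):ℤ) ≡ (-((k:ℕ):ℤ)) * ((i:ℕ):ℤ) [ZMOD (d:ℤ)] :=
                hmod.mul_right _
            _ = -(((k:ℕ):ℤ) * ((i:ℕ):ℤ)) := by ring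
      _ = (starRingEnd ℂ) (c k) := by
          rw [map_sum]
          apply Finset.sum_congr rfl
          intro i _
          rw [_root_.map_mul, ee_conj, _root_.map_pow, Complex.conj_ofReal]
  -- Step 4 : the phases
  set α : Fin d → ℝ := fun k => if (c k).arg < 0 then (c k).arg + 2*Real.pi else (c k).arg with hα
  have hexp : ∀ k : Fin d, Complex.exp (Complex.I * α k)
      = Complex.exp ((c k).arg * Complex.I) := by
    intro k
    rw [hα]
    by_cases h : (c k).arg < 0
    · simp only [if_pos h]
      rw [show Complex.I * (((c k).arg + 2*Real.pi : ℝ) : ℂ)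
          = (c k).arg * Complex.I + 2*Real.pi*Complex.I by push_cast; ring]
      rw [Complex.exp_add, Complex.exp_two_pi_mul_I, mul_one]
    · simp only [if_neg h]
      ring_nf
  refine ⟨α, ?_, ?_, ?_⟩
  · intro j
    have h1 := Complex.neg_pi_lt_arg (c j)
    have h2 := Complex.arg_le_pi (c j)
    have hpi := Real.pi_pos
    simp only [hα]
    constructor <;> split_ifs with h <;> linarith
  · intro j hj
    have hnj : (-j : Fin d) ≠ 0 := by
      simpa [neg_eq_zero] using hj
    have e1 : ∀ k : Fin d, k ≠ 0 → Complex.exp (Complex.I * α k) = c k / (‖c k‖ : ℂ) := by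
      intro k hk
      have hne : ((‖c k‖ : ℝ) : ℂ) ≠ 0 :=
        Complex.ofReal_ne_zero.mpr (norm_ne_zero_iff.mpr (hcne k hk))
      rw [hexp k, eq_div_iff hne, mul_comm]
      exact Complex.norm_mul_exp_arg_mul_I (c k)
    rw [e1 _ hnj, hconj j]
    have : Complex.exp (-(Complex.I * (α j : ℂ))) = (starRingEnd ℂ) (Complex.exp (Complex.I * (α j : ℂ))) := by
      rw [← Complex.exp_conj]
      congr 1
      simp [Complex.conj_I]
    rw [this, e1 j hj, map_div₀]
    congr 1
    rw [RCLike.norm_conj, Complex.conj_ofReal]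
  -- Step 5 : the vector identity
  · have hw : (fun j : Fin d =>
        if j = 0 then (1 / (Real.sqrt d : ℂ))
        else Complex.exp (Complex.I * α j) / (Real.sqrt (d * (d + 1)) : ℂ))
        = fun k => c k / (Real.sqrt d : ℂ) := by
      funext k
      by_cases hk : k = 0
      · rw [if_pos hk, hk, hc0]
      · rw [if_neg hk]
        have h1 : c k = (‖c k‖ : ℂ) * Complex.exp ((c k).arg * Complex.I) :=
          (Complex.norm_mul_exp_arg_mul_I _).symm
        have habs : ((‖c k‖ : ℝ) : ℂ) = ((Real.sqrt (1/((d:ℝ)+1)) : ℝ) : ℂ) := by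
          rw [hcnorm k hk]
        rw [h1, habs, ← hexp k]
        have hs1 : Real.sqrt ((d:ℝ) * ((d:ℝ)+1)) = Real.sqrt d * Real.sqrt ((d:ℝ)+1) :=
          Real.sqrt_mul (le_of_lt hdR) _
        have hs2 : Real.sqrt (1/((d:ℝ)+1)) = 1 / Real.sqrt ((d:ℝ)+1) := by
          rw [one_div, one_div, Real.sqrt_inv]
        have hne1 : Real.sqrt (d:ℝ) ≠ 0 := ne_of_gt (Real.sqrt_pos.mpr hdR)
        have hne2 : Real.sqrt ((d:ℝ)+1) ≠ 0 := ne_of_gt (Real.sqrt_pos.mpr (by positivity))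
        rw [hs1, hs2]
        push_cast
        have hne1' : (Real.sqrt (d:ℝ) : ℂ) ≠ 0 := by exact_mod_cast hne1
        have hne2' : (Real.sqrt ((d:ℝ)+1) : ℂ) ≠ 0 := by exact_mod_cast hne2
        field_simp
    rw [hw]
    funext i
    have hFe : ∀ j k : Fin d, Fmat d j k = ee d ((j:ℕ)*(k:ℕ)) / (Real.sqrt d : ℂ) := by
      intro j k
      rw [Fmat, ee]
      congr 2
      push_cast
      ring
    have hdC : ((d:ℝ) : ℂ) ≠ 0 := by exact_mod_cast ne_of_gt hdR
    have hsd : ((Real.sqrt d : ℝ) : ℂ) * ((Real.sqrt d : ℝ) : ℂ) = ((d:ℝ) : ℂ) := by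
      rw [← Complex.ofReal_mul, Real.mul_self_sqrt (le_of_lt hdR)]
    show (‖φ i‖ : ℂ)^2 = ∑ k : Fin d, star (Fmat d k i) * (c k / (Real.sqrt d : ℂ))
    have hterm : ∀ k : Fin d, star (Fmat d k i) * (c k / (Real.sqrt d : ℂ))
        = ∑ l : Fin d, ee d ((k:ℕ) * (((l:ℕ):ℤ) - ((i:ℕ):ℤ))) * ((‖φ l‖:ℂ)^2 / ((d:ℝ):ℂ)) := by
      intro k
      rw [hFe, hc]
      rw [show star (ee d ((k:ℕ)*(i:ℕ)) / (Real.sqrt d : ℂ))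
          = ee d (-((k:ℕ)*(i:ℕ))) / (Real.sqrt d : ℂ) by
        rw [star_div₀, ← ee_conj]
        congr 1
        exact Complex.conj_ofReal _]
      rw [div_mul_div_comm, hsd, Finset.mul_sum, Finset.sum_div]
      apply Finset.sum_congr rfl
      intro l _
      rw [show ee d (-((k:ℕ)*(i:ℕ))) * (ee d ((k:ℕ)*(l:ℕ)) * (‖φ l‖:ℂ)^2)
          = (ee d (-((k:ℕ)*(i:ℕ))) * ee d ((k:ℕ)*(l:ℕ))) * (‖φ l‖:ℂ)^2 by ring]
      rw [← ee_add]
      rw [show (-(((k:ℕ):ℤ)*((i:ℕ):ℤ)) + ((k:ℕ):ℤ)*((l:ℕ):ℤ))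
          = ((k:ℕ):ℤ) * (((l:ℕ):ℤ) - ((i:ℕ):ℤ)) by ring]
      ring
    rw [Finset.sum_congr rfl (fun k _ => hterm k), Finset.sum_comm]
    have hinner : ∀ l : Fin d,
        ∑ k : Fin d, ee d ((k:ℕ) * (((l:ℕ):ℤ) - ((i:ℕ):ℤ))) * ((‖φ l‖:ℂ)^2 / ((d:ℝ):ℂ))
        = (if (d:ℤ) ∣ (((l:ℕ):ℤ) - ((i:ℕ):ℤ)) then (d:ℂ) else 0) * ((‖φ l‖:ℂ)^2 / ((d:ℝ):ℂ)) := by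
      intro l
      rw [← Finset.sum_mul, ee_sum]
    rw [Finset.sum_congr rfl (fun l _ => hinner l)]
    rw [Finset.sum_eq_single i]
    · simp only [sub_self, dvd_zero, if_pos]
      rw [show ((d:ℂ)) = (((d:ℝ)):ℂ) by push_cast; rfl]
      rw [mul_comm, div_mul_cancel₀ _ hdC]
    · intro l _ hl
      have hnd : ¬ (d:ℤ) ∣ (((l:ℕ):ℤ) - ((i:ℕ):ℤ)) := by
        intro hdvd
        have hlt : |(((l:ℕ):ℤ) - ((i:ℕ):ℤ))| < (d:ℤ) := by
          have := l.isLt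
          have := i.isLt
          rw [abs_lt]
          constructor <;> omega
        have := Int.eq_zero_of_abs_lt_dvd hdvd hlt
        apply hl
        have : (l:ℕ) = (i:ℕ) := by omega
        exact Fin.ext this
      rw [if_neg hnd, zero_mul]
    · intro h
      exact absurd (Finset.mem_univ i) h
end

section
/- Let Z = e^{iπ(d−1)/12} F G be the Zauner unitary, where G is diagonal with G_{jj} = e^{iπ(d+1)j²/d} and F is the discrete Fourier transform. Then the three orthonormal bases given by the columns of I, Z, and Z² are pairwise mutually unbiased: |⟨j, Z k⟩|² = |⟨j, Z² k⟩|² = |(Z† Z²)_{jk}|² = 1/d for all j,k. -/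
open Matrix

/-- The diagonal matrix `G` with `G_{jj} = e^{iπ(d+1)j²/d}`. -/
noncomputable def Gmat (d : ℕ) : Matrix (Fin d) (Fin d) ℂ :=
  Matrix.diagonal fun j =>
    Complex.exp (Real.pi * Complex.I * ((d : ℂ) + 1) * ((j : ℕ) : ℂ) ^ 2 / d)

/-- The Zauner unitary `𝒵 = e^{iπ(d−1)/12} F G`. -/
noncomputable def Zauner (d : ℕ) : Matrix (Fin d) (Fin d) ℂ :=
  Complex.exp (Real.pi * Complex.I * ((d : ℂ) - 1) / 12) • (Fmat d * Gmat d)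

open Matrix Complex Finset

lemma norm_exp_eq_one' {z : ℂ} (h : z.re = 0) : ‖Complex.exp z‖ = 1 := by
  rw [Complex.norm_exp, h, Real.exp_zero]

lemma geom_fin (d : ℕ) [NeZero d] (a : ℤ) :
    ∑ m : Fin d, Complex.exp (2 * Real.pi * Complex.I * (a : ℂ) / d) ^ (m : ℕ)
      = if (d : ℤ) ∣ a then (d : ℂ) else 0 := by
  have hd : (d : ℂ) ≠ 0 := Nat.cast_ne_zero.mpr (NeZero.ne d)
  set ζ : ℂ := Complex.exp (2 * Real.pi * Complex.I * (a : ℂ) / d) with hζ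
  have hζd : ζ ^ d = 1 := by
    rw [hζ, ← Complex.exp_nat_mul]
    have : (d : ℂ) * (2 * Real.pi * Complex.I * (a : ℂ) / d) = (a : ℂ) * (2 * Real.pi * Complex.I) := by
      field_simp
    rw [this, Complex.exp_int_mul_two_pi_mul_I]
  have hζ1 : ζ = 1 ↔ (d : ℤ) ∣ a := by
    rw [hζ, Complex.exp_eq_one_iff]
    constructor
    · rintro ⟨n, hn⟩
      have hπ : (2 : ℂ) * Real.pi * Complex.I ≠ 0 := by
        simp [Real.pi_ne_zero, Complex.I_ne_zero]
      field_simp at hn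
      have h2 : (a : ℂ) = ((n * d : ℤ) : ℂ) := by
        apply mul_left_cancel₀ hπ
        push_cast
        linear_combination (2 * Real.pi * Complex.I) * hn
      exact ⟨n, by rw [mul_comm]; exact_mod_cast h2⟩
    · rintro ⟨n, hn⟩
      exact ⟨n, by rw [hn]; push_cast; field_simp⟩
  rw [Fin.sum_univ_eq_sum_range]
  by_cases h : (d : ℤ) ∣ a
  · simp [hζ1.mpr h, h]
  · have hne : ζ ≠ 1 := fun hc => h (hζ1.mp hc)
    rw [geom_sum_eq hne, hζd, if_neg h, sub_self, zero_div]

noncomputable def gph (d : ℕ) (t m : ℤ) : ℂ :=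
  Complex.exp (Real.pi * Complex.I * ((d:ℂ)+1) * (m:ℂ)^2 / d + 2*Real.pi*Complex.I*(m:ℂ)*(t:ℂ)/d)

lemma gph_periodic (d : ℕ) [NeZero d] (t : ℤ) : Function.Periodic (gph d t) (d : ℤ) := by
  intro m
  have hd : (d : ℂ) ≠ 0 := Nat.cast_ne_zero.mpr (NeZero.ne d)
  obtain ⟨e, he⟩ : Even (d * (d + 1)) := Nat.even_mul_succ_self d
  have he' : (e : ℂ) + e = (d : ℂ) * ((d : ℂ) + 1) := by exact_mod_cast he.symm
  have key : Real.pi * Complex.I * ((d:ℂ)+1) * ((m + d : ℤ):ℂ)^2 / d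
        + 2*Real.pi*Complex.I*((m + d : ℤ):ℂ)*(t:ℂ)/d
      = (Real.pi * Complex.I * ((d:ℂ)+1) * (m:ℂ)^2 / d + 2*Real.pi*Complex.I*(m:ℂ)*(t:ℂ)/d)
        + (((d+1)*m + t + (e:ℤ) : ℤ):ℂ) * (2 * Real.pi * Complex.I) := by
    push_cast
    field_simp
    linear_combination (-(d:ℂ)) * he'
  unfold gph
  rw [key, Complex.exp_add, Complex.exp_int_mul_two_pi_mul_I, mul_one]

lemma gph_congr (d : ℕ) [NeZero d] (t : ℤ) {a b : ℤ} (h : (d:ℤ) ∣ a - b) :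
    gph d t a = gph d t b := by
  obtain ⟨k, hk⟩ := h
  have hb : b = a - k * (d : ℤ) := by linarith
  rw [hb]
  exact ((gph_periodic d t).sub_int_mul_eq k).symm

lemma conj_gph (d : ℕ) (t m : ℤ) :
    (starRingEnd ℂ) (gph d t m)
      = Complex.exp (-(Real.pi * Complex.I * ((d:ℂ)+1) * (m:ℂ)^2 / d
          + 2*Real.pi*Complex.I*(m:ℂ)*(t:ℂ)/d)) := by
  unfold gph
  rw [← Complex.exp_conj]
  congr 1
  simp only [map_add, _root_.map_mul, map_div₀, map_ofNat, Complex.conj_I, map_pow,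
    Complex.conj_ofReal, map_natCast, map_intCast, _root_.map_one, map_neg]
  ring

lemma gph_zero (d : ℕ) (t : ℤ) : gph d t 0 = 1 := by
  simp [gph]

lemma gauss_sum_abs (d : ℕ) [NeZero d] (t : ℤ) :
    (∑ m : Fin d, gph d t (m.val : ℤ)) * (starRingEnd ℂ) (∑ m : Fin d, gph d t (m.val : ℤ))
      = (d : ℂ) := by
  have hd : (d : ℂ) ≠ 0 := Nat.cast_ne_zero.mpr (NeZero.ne d)
  rw [map_sum, Finset.sum_mul_sum, Finset.sum_comm]
  have step1 : ∀ n : Fin d,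
      ∑ m : Fin d, gph d t (m.val : ℤ) * (starRingEnd ℂ) (gph d t (n.val : ℤ))
      = ∑ r : Fin d, gph d t (r.val : ℤ)
          * Complex.exp (2 * Real.pi * Complex.I * (((d + 1 : ℤ) * (r.val : ℤ) : ℤ) : ℂ) / d)
            ^ (n.val : ℕ) := by
    intro n
    rw [← Fintype.sum_equiv (Equiv.addLeft n)
      (fun r : Fin d => gph d t (((n + r : Fin d).val : ℕ) : ℤ) * (starRingEnd ℂ) (gph d t (n.val : ℤ)))
      (fun m : Fin d => gph d t (m.val : ℤ) * (starRingEnd ℂ) (gph d t (n.val : ℤ)))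
      (fun r => rfl)]
    refine Finset.sum_congr rfl fun r _ => ?_
    have h1 : gph d t (((n + r : Fin d).val : ℕ) : ℤ) = gph d t ((n.val : ℤ) + (r.val : ℤ)) := by
      apply gph_congr
      have hv : ((n + r : Fin d).val : ℤ) = ((n.val + r.val : ℕ) : ℤ) % d := by
        rw [Fin.val_add]; exact_mod_cast Int.natCast_mod _ _
      rw [hv]
      have : ((n.val + r.val : ℕ) : ℤ) % d - ((n.val:ℤ) + (r.val:ℤ))
          = -((d:ℤ) * (((n.val + r.val : ℕ) : ℤ) / d)) := by
        rw [Int.emod_def]; push_cast; ring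
      rw [this, dvd_neg]
      exact Dvd.intro _ rfl
    rw [h1, conj_gph, ← Complex.exp_nat_mul]
    unfold gph
    rw [← Complex.exp_add, ← Complex.exp_add]
    congr 1
    push_cast
    field_simp
    ring
  rw [Finset.sum_congr rfl fun n _ => step1 n, Finset.sum_comm]
  have step2 : ∀ r : Fin d,
      ∑ n : Fin d, gph d t (r.val : ℤ)
          * Complex.exp (2 * Real.pi * Complex.I * (((d + 1 : ℤ) * (r.val : ℤ) : ℤ) : ℂ) / d)
            ^ (n.val : ℕ)
      = if r = 0 then (d : ℂ) else 0 := by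
    intro r
    rw [← Finset.mul_sum, geom_fin d ((d + 1 : ℤ) * (r.val : ℤ))]
    have hdvd : (d:ℤ) ∣ (d + 1 : ℤ) * (r.val : ℤ) ↔ r = 0 := by
      rw [add_one_mul]
      rw [Int.dvd_add_right ⟨(r.val : ℤ), rfl⟩]
      constructor
      · intro h
        have hr : (r.val : ℤ) = 0 := by
          refine Int.eq_zero_of_abs_lt_dvd h ?_
          rw [abs_of_nonneg (by positivity : (0:ℤ) ≤ (r.val : ℤ))]
          exact_mod_cast r.isLt
        ext
        simpa using hr
      · rintro rfl
        simp
    by_cases hr : r = 0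
    · subst hr
      rw [if_pos (hdvd.mpr rfl), if_pos rfl]
      have : ((0 : Fin d).val : ℤ) = 0 := by simp
      rw [this, gph_zero, one_mul]
    · rw [if_neg (fun h => hr (hdvd.mp h)), if_neg hr, mul_zero]
  rw [Finset.sum_congr rfl fun r _ => step2 r, Finset.sum_ite_eq' Finset.univ (0 : Fin d)]
  simp
lemma norm_exp_real_mul_I (θ : ℝ) : ‖Complex.exp ((θ:ℂ) * Complex.I)‖ = 1 := by
  rw [Complex.norm_exp_ofReal_mul_I]

lemma sqrt_mul_self_C (d : ℕ) : (Real.sqrt d : ℂ) * (Real.sqrt d : ℂ) = (d : ℂ) := by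
  rw [← Complex.ofReal_mul, Real.mul_self_sqrt (Nat.cast_nonneg d), Complex.ofReal_natCast]

lemma Fmat_conjT_mul (d : ℕ) [NeZero d] : (Fmat d)ᴴ * Fmat d = 1 := by
  have hd : (d : ℂ) ≠ 0 := Nat.cast_ne_zero.mpr (NeZero.ne d)
  ext j k
  rw [Matrix.mul_apply, Matrix.one_apply]
  have key : ∀ m : Fin d, (Fmat d)ᴴ j m * Fmat d m k
      = Complex.exp (2 * Real.pi * Complex.I * ((((k.val : ℤ) - (j.val : ℤ)) : ℤ) : ℂ) / d)
          ^ (m.val : ℕ) / d := by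
    intro m
    rw [Matrix.conjTranspose_apply]
    unfold Fmat
    rw [Complex.star_def, map_div₀, ← Complex.exp_conj, Complex.conj_ofReal,
      div_mul_div_comm, sqrt_mul_self_C, ← Complex.exp_add, ← Complex.exp_nat_mul]
    congr 2
    simp only [map_add, _root_.map_mul, map_div₀, map_ofNat, Complex.conj_I,
      Complex.conj_ofReal, map_natCast, _root_.map_one]
    push_cast
    field_simp
    ring
  rw [Finset.sum_congr rfl fun m _ => key m, ← Finset.sum_div,
    geom_fin d ((k.val : ℤ) - (j.val : ℤ))]
  by_cases h : j = k
  · subst h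
    rw [if_pos rfl, if_pos (by simp), div_self hd]
  · rw [if_neg h, if_neg, zero_div]
    intro hdvd
    have h0 : (k.val : ℤ) - (j.val : ℤ) = 0 := by
      refine Int.eq_zero_of_abs_lt_dvd hdvd ?_
      rw [abs_lt]
      have := j.isLt; have := k.isLt
      constructor <;> [push_cast; push_cast] <;> omega
    exact h (by ext; omega)

lemma Gmat_conjT_mul (d : ℕ) [NeZero d] : (Gmat d)ᴴ * Gmat d = 1 := by
  unfold Gmat
  rw [Matrix.diagonal_conjTranspose, Matrix.diagonal_mul_diagonal]
  ext i r
  rw [Matrix.diagonal_apply, Matrix.one_apply]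
  by_cases h : i = r
  · rw [if_pos h, if_pos h]
    simp only [Pi.mul_apply, Pi.star_apply, Complex.star_def, ← Complex.exp_conj,
      ← Complex.exp_add]
    rw [show (starRingEnd ℂ) (Real.pi * Complex.I * ((d : ℂ) + 1) * ((i : ℕ) : ℂ) ^ 2 / d)
        = -(Real.pi * Complex.I * ((d : ℂ) + 1) * ((i : ℕ) : ℂ) ^ 2 / d) by
      simp only [map_add, _root_.map_mul, map_div₀, map_ofNat, Complex.conj_I,
        Complex.conj_ofReal, map_natCast, _root_.map_one, map_pow]
      ring]
    rw [neg_add_cancel, Complex.exp_zero]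
  · rw [if_neg h, if_neg h]

/-- The three orthonormal bases given by the columns of `I`, `𝒵`, and
`𝒵²` are pairwise mutually unbiased:
`|⟨j, 𝒵 k⟩|² = |⟨j, 𝒵² k⟩|² = |(𝒵† 𝒵²)_{jk}|² = 1/d` for all `j,k`. -/
theorem zauner_bases_mub (d : ℕ) [NeZero d] :
    ∀ j k : Fin d,
      ‖Zauner d j k‖ ^ 2 = 1 / d ∧
      ‖(Zauner d * Zauner d) j k‖ ^ 2 = 1 / d ∧
      ‖((Zauner d)ᴴ * (Zauner d * Zauner d)) j k‖ ^ 2 = 1 / d := by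
  have hd : (d : ℂ) ≠ 0 := Nat.cast_ne_zero.mpr (NeZero.ne d)
  have hdR : (d : ℝ) ≠ 0 := Nat.cast_ne_zero.mpr (NeZero.ne d)
  have hdR0 : (0:ℝ) ≤ (d : ℝ) := Nat.cast_nonneg d
  set c : ℂ := Complex.exp (Real.pi * Complex.I * ((d : ℂ) - 1) / 12) with hcdef
  have hc : ‖c‖ = 1 := by
    rw [hcdef, show Real.pi * Complex.I * ((d : ℂ) - 1) / 12
      = ((Real.pi * ((d:ℝ) - 1) / 12 : ℝ) : ℂ) * Complex.I by push_cast; ring]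
    exact norm_exp_real_mul_I _
  have hgd : ∀ x : Fin d,
      ‖Complex.exp (Real.pi * Complex.I * ((d : ℂ) + 1) * ((x : ℕ) : ℂ) ^ 2 / d)‖ = 1 := by
    intro x
    rw [show Real.pi * Complex.I * ((d : ℂ) + 1) * ((x : ℕ) : ℂ) ^ 2 / d
      = ((Real.pi * ((d:ℝ) + 1) * (x.val:ℝ) ^ 2 / d : ℝ) : ℂ) * Complex.I by push_cast; ring]
    exact norm_exp_real_mul_I _
  have hF : ∀ x y : Fin d,
      ‖Complex.exp (2 * Real.pi * Complex.I * ((x : ℕ) : ℂ) * ((y : ℕ) : ℂ) / d)‖ = 1 := by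
    intro x y
    rw [show 2 * Real.pi * Complex.I * ((x : ℕ) : ℂ) * ((y : ℕ) : ℂ) / d
      = ((2 * Real.pi * (x.val:ℝ) * (y.val:ℝ) / d : ℝ) : ℂ) * Complex.I by push_cast; ring]
    exact norm_exp_real_mul_I _
  have part1 : ∀ j k : Fin d, ‖Zauner d j k‖ ^ 2 = 1 / d := by
    intro j k
    rw [Zauner, Matrix.smul_apply, smul_eq_mul, show Fmat d * Gmat d = Fmat d *
      Matrix.diagonal (fun x : Fin d =>
        Complex.exp (Real.pi * Complex.I * ((d : ℂ) + 1) * ((x : ℕ) : ℂ) ^ 2 / d)) from rfl,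
      Matrix.mul_diagonal]
    unfold Fmat
    rw [norm_mul, norm_mul, norm_div, ← hcdef, hc, hF, hgd, Complex.norm_real,
      Real.norm_eq_abs, _root_.abs_of_nonneg (Real.sqrt_nonneg _)]
    rw [one_mul, mul_one, one_div, inv_pow, Real.sq_sqrt hdR0, inv_eq_one_div]
  refine fun j k => ⟨part1 j k, ?_, ?_⟩
  · -- Z²
    have hterm : ∀ m : Fin d,
        (Fmat d * Gmat d) j m * (Fmat d * Gmat d) m k
          = gph d ((j.val : ℤ) + (k.val : ℤ)) (m.val : ℤ) *
            (Complex.exp (Real.pi * Complex.I * ((d : ℂ) + 1) * ((k : ℕ) : ℂ) ^ 2 / d) / d) := by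
      intro m
      rw [show Fmat d * Gmat d = Fmat d *
        Matrix.diagonal (fun x : Fin d =>
          Complex.exp (Real.pi * Complex.I * ((d : ℂ) + 1) * ((x : ℕ) : ℂ) ^ 2 / d)) from rfl,
        Matrix.mul_diagonal, Matrix.mul_diagonal]
      unfold Fmat gph
      have hcomb : ∀ a b cc e s : ℂ, (a / s * b) * (cc / s * e) = a * b * cc * e / (s * s) :=
        fun _ _ _ _ _ => by ring
      rw [hcomb, sqrt_mul_self_C, ← Complex.exp_add, ← Complex.exp_add, ← Complex.exp_add,
        mul_div_assoc', ← Complex.exp_add]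
      congr 2
      push_cast
      field_simp
      ring
    have hZZ : (Zauner d * Zauner d) j k
        = (c * c) * ((∑ m : Fin d, gph d ((j.val : ℤ) + (k.val : ℤ)) (m.val : ℤ)) *
            (Complex.exp (Real.pi * Complex.I * ((d : ℂ) + 1) * ((k : ℕ) : ℂ) ^ 2 / d) / d)) := by
      rw [Zauner, Matrix.smul_mul, Matrix.mul_smul, smul_smul, Matrix.smul_apply, smul_eq_mul,
        ← hcdef, Matrix.mul_apply, Finset.sum_congr rfl fun m _ => hterm m, ← Finset.sum_mul]
    have hS : ‖∑ m : Fin d, gph d ((j.val : ℤ) + (k.val : ℤ)) (m.val : ℤ)‖ ^ 2 = d := by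
      have h := gauss_sum_abs d ((j.val : ℤ) + (k.val : ℤ))
      rw [Complex.mul_conj] at h
      have : Complex.normSq (∑ m : Fin d, gph d ((j.val : ℤ) + (k.val : ℤ)) (m.val : ℤ)) = (d : ℝ) := by exact_mod_cast h
      rw [Complex.sq_norm, this]
    rw [hZZ, norm_mul, norm_mul, norm_mul, norm_div, hc, hgd, Complex.norm_natCast]
    rw [one_mul, one_mul, mul_pow, hS]
    field_simp
  · -- Z† Z² = Z
    have hZ : (Zauner d)ᴴ * (Zauner d * Zauner d) = Zauner d := by
      rw [Zauner, Matrix.conjTranspose_smul]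
      simp only [Matrix.smul_mul, Matrix.mul_smul, smul_smul]
      have hstar : star c * c = 1 := by
        rw [Complex.star_def, hcdef, ← Complex.exp_conj, ← Complex.exp_add,
          show (starRingEnd ℂ) (Real.pi * Complex.I * ((d : ℂ) - 1) / 12)
            = -(Real.pi * Complex.I * ((d : ℂ) - 1) / 12) by
          simp only [map_add, _root_.map_mul, map_div₀, map_ofNat, Complex.conj_I,
            Complex.conj_ofReal, map_natCast, _root_.map_one, map_sub]
          ring]
        rw [neg_add_cancel, Complex.exp_zero]
      have h1 : c * c * star c = c := by
        rw [mul_comm (c * c) (star c), ← mul_assoc, hstar, one_mul]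
      have h2 : (Fmat d * Gmat d)ᴴ * (Fmat d * Gmat d * (Fmat d * Gmat d))
          = Fmat d * Gmat d := by
        rw [Matrix.conjTranspose_mul]
        simp only [← Matrix.mul_assoc]
        rw [Matrix.mul_assoc ((Gmat d)ᴴ) ((Fmat d)ᴴ) (Fmat d), Fmat_conjT_mul,
          Matrix.mul_one, Gmat_conjT_mul, Matrix.one_mul]
      rw [← hcdef, h1, h2]
    rw [hZ]
    exact part1 j k
end
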